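/- Let q be a real number with 0 < q < 1, let x be a real number, let n be a nonnegative integer, and let f be an odd positive integer. Then the Abel-regularized alternating sum ∑_{l=0}^∞ (−1)^l [x+l]_q^n, computed by grouping the index l as l = a + mf with 0 ≤ a < f, satisfies: for each 0 < r < 1 the series ∑_{a=0}^{f−1} (−1)^a ∑_{m=0}^∞ (−1)^m r^m [f]_q^n [ (x+a)/f + m ]_{q^f}^n converges, and lim_{r→1⁻} of this expression equals E_{n,q}(x)/2, where [ (x+a)/f + m ]_{q^f} = (1 − q^{x+a+mf})/(1 − q^f). -/

import Mathlib

open Filter Finset Topology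

/-- The `q`-Euler polynomial `E_{n,q}(x) = 2·(1/(1−q))^n · ∑_{j=0}^n C(n,j)·(−1)^j·q^{xj}/(1+q^j)`,
where `q^{xj}` is a real power (`rpow`). -/
noncomputable def qEulerPoly (q : ℝ) (n : ℕ) (x : ℝ) : ℝ :=
  2 * (1/(1-q))^n *
    ∑ j ∈ Finset.range (n+1), (n.choose j : ℝ) * (-1)^j * q ^ (x * (j:ℝ)) / (1 + q^j)

/-- grouping the Abel-regularized alternating sum `∑ (−1)^l [x+l]_q^n` by
residues `l = a + m f` (`0 ≤ a < f`, `f` odd): for each `0 < r < 1` the inner series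
converge, and
`lim_{r→1⁻} ∑_{a<f} (−1)^a ∑_m (−1)^m r^m [f]_q^n [(x+a)/f + m]_{q^f}^n = E_{n,q}(x)/2`,
where `[(x+a)/f + m]_{q^f} = (1 − q^{x+a+mf})/(1 − q^f)`. -/
theorem qEulerPoly_multiplication_abel (q : ℝ) (hq0 : 0 < q) (hq1 : q < 1)
    (x : ℝ) (n : ℕ) (f : ℕ) (hf : Odd f) (hfpos : 0 < f) :
    (∀ r ∈ Set.Ioo (0:ℝ) 1, ∀ a ∈ Finset.range f,
      Summable (fun m : ℕ => (-1:ℝ)^m * r^m * ((1 - q^f)/(1-q))^n *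
        ((1 - q^(x + (a:ℝ) + (m:ℝ)*(f:ℝ)))/(1 - q^f))^n)) ∧
    Tendsto (fun r : ℝ => ∑ a ∈ Finset.range f, (-1:ℝ)^a *
        ∑' m : ℕ, (-1:ℝ)^m * r^m * ((1 - q^f)/(1-q))^n *
          ((1 - q^(x + (a:ℝ) + (m:ℝ)*(f:ℝ)))/(1 - q^f))^n)
      (nhdsWithin (1:ℝ) (Set.Iio 1))
      (nhds (qEulerPoly q n x / 2)) := by
  have hq1' : (1:ℝ) - q ≠ 0 := by linarith
  set s : ℝ := q ^ f with hs
  have hs0 : 0 < s := pow_pos hq0 f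
  have hs1 : s < 1 := pow_lt_one₀ hq0.le hq1 hfpos.ne'
  have hsne : (1:ℝ) - s ≠ 0 := by linarith
  -- the coefficient
  set c : ℕ → ℕ → ℝ := fun a j =>
    (1/(1-q))^n * (n.choose j : ℝ) * (-1)^j * (q ^ (x + (a:ℝ)))^j with hc
  -- exponent rewriting
  have hA : ∀ (a m : ℕ), q ^ (x + (a:ℝ) + (m:ℝ)*(f:ℝ)) = q ^ (x + (a:ℝ)) * s ^ m := by
    intro a m
    rw [Real.rpow_add hq0]
    congr 1
    rw [show ((m:ℝ)*(f:ℝ)) = ((m*f : ℕ) : ℝ) by push_cast; ring, Real.rpow_natCast,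
      mul_comm m f, pow_mul]
  -- key identity: each term is a finite sum of geometric terms
  have key : ∀ (r : ℝ) (a m : ℕ),
      (-1:ℝ)^m * r^m * ((1 - q^f)/(1-q))^n *
        ((1 - q^(x + (a:ℝ) + (m:ℝ)*(f:ℝ)))/(1 - q^f))^n
      = ∑ j ∈ Finset.range (n+1), c a j * (-(r * s^j))^m := by
    intro r a m
    simp only [hA, ← hs]
    set T : ℝ := q ^ (x + (a:ℝ)) with hT
    have h1 : ((1 - s)/(1-q)) * ((1 - T * s^m)/(1 - s)) = 1/(1-q) * (1 - T * s^m) := by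
      field_simp
    have h2 : (1 - T * s^m)^n
        = ∑ j ∈ Finset.range (n+1), (-(T * s^m))^j * (n.choose j : ℝ) := by
      have h := add_pow (-(T * s^m)) (1:ℝ) n
      simp only [one_pow, mul_one] at h
      rw [show (1:ℝ) - T * s^m = -(T*s^m) + 1 by ring]
      exact h
    calc (-1:ℝ)^m * r^m * ((1 - s)/(1-q))^n * ((1 - T * s^m)/(1 - s))^n
        = (-1:ℝ)^m * r^m * (((1 - s)/(1-q)) * ((1 - T * s^m)/(1 - s)))^n := by
          rw [mul_pow, mul_assoc]
      _ = (-1:ℝ)^m * r^m * ((1/(1-q))^n * (1 - T * s^m)^n) := by rw [h1, mul_pow]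
      _ = ∑ j ∈ Finset.range (n+1), c a j * (-(r * s^j))^m := by
          rw [h2, Finset.mul_sum, Finset.mul_sum]
          refine Finset.sum_congr rfl fun j _ => ?_
          have hrc : ((s:ℝ)^m)^j = (s^j)^m := pow_right_comm s m j
          rw [neg_pow (T * s^m), neg_pow (r * s^j), mul_pow, mul_pow, hrc]
          simp only [hc]
          rw [hT]
          ring
  -- summability of the grouped form
  have hzlt : ∀ r : ℝ, r ∈ Set.Ioo (0:ℝ) 1 → ∀ j : ℕ, ‖-(r * s^j)‖ < 1 := by
    intro r hr j
    rw [norm_neg, Real.norm_eq_abs,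
      abs_of_nonneg (mul_nonneg hr.1.le (pow_nonneg hs0.le j))]
    calc r * s^j ≤ r * 1 :=
          mul_le_mul_of_nonneg_left (pow_le_one₀ hs0.le hs1.le) hr.1.le
      _ < 1 := by rw [mul_one]; exact hr.2
  have hsummable : ∀ r : ℝ, r ∈ Set.Ioo (0:ℝ) 1 → ∀ a : ℕ,
      Summable (fun m : ℕ => (-1:ℝ)^m * r^m * ((1 - q^f)/(1-q))^n *
        ((1 - q^(x + (a:ℝ) + (m:ℝ)*(f:ℝ)))/(1 - q^f))^n) := by
    intro r hr a
    have : Summable (fun m : ℕ => ∑ j ∈ Finset.range (n+1), c a j * (-(r * s^j))^m) :=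
      summable_sum fun j _ =>
        (summable_geometric_of_norm_lt_one (hzlt r hr j)).mul_left _
    exact this.congr fun m => (key r a m).symm
  refine ⟨fun r hr a _ => hsummable r hr a, ?_⟩
  -- closed form of the inner tsum
  have htsum : ∀ r : ℝ, r ∈ Set.Ioo (0:ℝ) 1 → ∀ a : ℕ,
      (∑' m : ℕ, (-1:ℝ)^m * r^m * ((1 - q^f)/(1-q))^n *
        ((1 - q^(x + (a:ℝ) + (m:ℝ)*(f:ℝ)))/(1 - q^f))^n)
      = ∑ j ∈ Finset.range (n+1), c a j * (1 + r * s^j)⁻¹ := by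
    intro r hr a
    rw [tsum_congr (fun m => key r a m),
      Summable.tsum_finsetSum (fun j _ => (summable_geometric_of_norm_lt_one (hzlt r hr j)).mul_left _)]
    refine Finset.sum_congr rfl fun j _ => ?_
    rw [tsum_mul_left, tsum_geometric_of_norm_lt_one (hzlt r hr j), sub_neg_eq_add]
  -- the closed form G
  set G : ℝ → ℝ := fun r => (1/(1-q))^n * ∑ j ∈ Finset.range (n+1),
    (n.choose j : ℝ) * (-1)^j * (q^x)^j * (1 + s^j) / ((1 + q^j) * (1 + r * s^j)) with hG
  have hqj : ∀ j : ℕ, (0:ℝ) < 1 + q^j := fun j => by positivity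
  -- F = G on Ioo 0 1
  have hFG : ∀ r : ℝ, r ∈ Set.Ioo (0:ℝ) 1 →
      (∑ a ∈ Finset.range f, (-1:ℝ)^a *
        ∑' m : ℕ, (-1:ℝ)^m * r^m * ((1 - q^f)/(1-q))^n *
          ((1 - q^(x + (a:ℝ) + (m:ℝ)*(f:ℝ)))/(1 - q^f))^n) = G r := by
    intro r hr
    have h1 : ∀ a ∈ Finset.range f, (-1:ℝ)^a *
        (∑' m : ℕ, (-1:ℝ)^m * r^m * ((1 - q^f)/(1-q))^n *
          ((1 - q^(x + (a:ℝ) + (m:ℝ)*(f:ℝ)))/(1 - q^f))^n)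
        = ∑ j ∈ Finset.range (n+1), (-1:ℝ)^a * (c a j * (1 + r * s^j)⁻¹) := by
      intro a _
      rw [htsum r hr a, Finset.mul_sum]
    rw [Finset.sum_congr rfl h1, Finset.sum_comm]
    simp only [hG]
    rw [Finset.mul_sum]
    refine Finset.sum_congr rfl fun j _ => ?_
    have hca : ∀ a : ℕ, c a j = (1/(1-q))^n * (n.choose j : ℝ) * (-1)^j
        * (q^x)^j * ((q^j)^a) := by
      intro a
      simp only [hc]
      rw [Real.rpow_add hq0, Real.rpow_natCast, mul_pow, ← pow_mul, ← pow_mul, mul_comm a j]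
      ring
    have hqjne : (-(q^j) : ℝ) ≠ 1 := by nlinarith [pow_pos hq0 j]
    have hgeom : ∑ a ∈ Finset.range f, (-1:ℝ)^a * (q^j)^a
        = (1 + s^j) / (1 + q^j) := by
      have h2 : ∀ a : ℕ, (-1:ℝ)^a * (q^j)^a = (-(q^j))^a := fun a => by
        rw [neg_pow]; ring
      rw [Finset.sum_congr rfl fun a _ => h2 a, geom_sum_eq hqjne]
      rw [hf.neg_pow, ← pow_mul, mul_comm j f, pow_mul]
      rw [div_eq_div_iff (by nlinarith [pow_pos hq0 j]) (hqj j).ne']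
      ring
    have hrs : (0:ℝ) < 1 + r * s^j := by
      have : 0 ≤ r * s^j := mul_nonneg hr.1.le (pow_nonneg hs0.le j)
      linarith
    calc ∑ a ∈ Finset.range f, (-1:ℝ)^a * (c a j * (1 + r * s^j)⁻¹)
        = (∑ a ∈ Finset.range f, (-1:ℝ)^a * (q^j)^a) *
            ((1/(1-q))^n * (n.choose j : ℝ) * (-1)^j * (q^x)^j * (1 + r * s^j)⁻¹) := by
          rw [Finset.sum_mul]
          exact Finset.sum_congr rfl fun a _ => by rw [hca a]; ring
      _ = (1/(1-q))^n * ((n.choose j : ℝ) * (-1)^j * (q^x)^j * (1 + s^j)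
            / ((1 + q^j) * (1 + r * s^j))) := by
          rw [hgeom]
          field_simp
  -- G is continuous at 1
  have hterm : ∀ j : ℕ, ContinuousAt (fun r : ℝ =>
      (n.choose j : ℝ) * (-1)^j * (q^x)^j * (1 + s^j) / ((1 + q^j) * (1 + r * s^j))) 1 := by
    intro j
    have hne : ((1 + q^j) * (1 + (1:ℝ) * s^j)) ≠ 0 := by positivity
    exact ContinuousAt.div continuousAt_const (by fun_prop) hne
  have hGcont : ContinuousAt G 1 := by
    rw [hG]
    exact ContinuousAt.mul continuousAt_const
      (tendsto_finset_sum _ fun j _ => hterm j)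
  -- G 1 is the target value
  have hG1 : G 1 = qEulerPoly q n x / 2 := by
    simp only [hG, qEulerPoly, one_mul]
    have hterm : ∀ j ∈ Finset.range (n+1),
        (n.choose j : ℝ) * (-1)^j * (q^x)^j * (1 + s^j) / ((1 + q^j) * (1 + s^j))
        = (n.choose j : ℝ) * (-1)^j * q ^ (x * (j:ℝ)) / (1 + q^j) := by
      intro j _
      have hsjne : (1:ℝ) + s^j ≠ 0 := by positivity
      rw [Real.rpow_mul hq0.le, Real.rpow_natCast, mul_div_mul_right _ _ hsjne]
    rw [Finset.sum_congr rfl hterm]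
    ring
  -- conclude
  have hmem : Set.Ioo (0:ℝ) 1 ∈ nhdsWithin (1:ℝ) (Set.Iio 1) := by
    have h1 : Set.Ioi (0:ℝ) ∈ nhdsWithin (1:ℝ) (Set.Iio 1) :=
      mem_nhdsWithin_of_mem_nhds (Ioi_mem_nhds one_pos)
    have h2 : Set.Iio (1:ℝ) ∈ nhdsWithin (1:ℝ) (Set.Iio 1) := self_mem_nhdsWithin
    have := Filter.inter_mem h1 h2
    rwa [Set.Ioi_inter_Iio] at this
  have hEq : G =ᶠ[nhdsWithin (1:ℝ) (Set.Iio 1)] (fun r : ℝ =>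
      ∑ a ∈ Finset.range f, (-1:ℝ)^a *
        ∑' m : ℕ, (-1:ℝ)^m * r^m * ((1 - q^f)/(1-q))^n *
          ((1 - q^(x + (a:ℝ) + (m:ℝ)*(f:ℝ)))/(1 - q^f))^n) :=
    Filter.eventuallyEq_of_mem hmem fun r hr => (hFG r hr).symm
  have hGtendsto : Tendsto G (nhdsWithin (1:ℝ) (Set.Iio 1)) (nhds (qEulerPoly q n x / 2)) := by
    rw [← hG1]
    exact hGcont.continuousWithinAt.tendsto
  exact hGtendsto.congr' hEq
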